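/- Let J ⊆ ℝ be an open interval and φ : J → ℝ be continuously differentiable. If u : I → J is a C² solution of the grim-reaper equation u''(x) = φ'(u(x))·(1 + u'(x)²) on an interval I ⊆ ℝ, then the function x ↦ e^{φ(u(x))} / √(1 + u'(x)²) is constant on I. In particular, if 0 ∈ I, u(0) = u₀ and u'(0) = 0, then u'(x)² = e^{2(φ(u(x)) − φ(u₀))} − 1 for every x ∈ I. -/

import Mathlib

open Set Filter

/-- Along any C² solution `u` of the grim-reaper equation
`u'' = φ'(u)(1 + u'²)` with values in an open interval `J` where `φ` is C¹,
the quantity `e^{φ(u)} / √(1 + u'²)` is constant; in particular, with initial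
conditions `u 0 = u₀`, `u' 0 = 0` one has `u'² = e^{2(φ(u) - φ(u₀))} - 1`. -/
theorem stmt_0 (J I : Set ℝ) (hJopen : IsOpen J) (hJconv : Convex ℝ J)
    (hIopen : IsOpen I) (hIconv : Convex ℝ I)
    (φ φ' : ℝ → ℝ)
    (hφ : ∀ t ∈ J, HasDerivAt φ (φ' t) t)
    (hφ'c : ContinuousOn φ' J)
    (u u' : ℝ → ℝ)
    (hmaps : ∀ x ∈ I, u x ∈ J)
    (hu : ∀ x ∈ I, HasDerivAt u (u' x) x)
    (hu' : ∀ x ∈ I, HasDerivAt u' (φ' (u x) * (1 + u' x ^ 2)) x) :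
    (∀ x ∈ I, ∀ y ∈ I,
      Real.exp (φ (u x)) / Real.sqrt (1 + u' x ^ 2)
        = Real.exp (φ (u y)) / Real.sqrt (1 + u' y ^ 2)) ∧
    (∀ u₀ : ℝ, (0 : ℝ) ∈ I → u 0 = u₀ → u' 0 = 0 →
      ∀ x ∈ I, u' x ^ 2 = Real.exp (2 * (φ (u x) - φ u₀)) - 1) := by
  set f : ℝ → ℝ := fun x => φ (u x) - Real.log (1 + u' x ^ 2) / 2 with hf
  have hpos : ∀ x : ℝ, (0 : ℝ) < 1 + u' x ^ 2 := fun x => by positivity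
  have hdf : ∀ x ∈ I, HasDerivAt f 0 x := by
    intro x hx
    have h1 : HasDerivAt (fun y => φ (u y)) (φ' (u x) * u' x) x :=
      (hφ (u x) (hmaps x hx)).comp x (hu x hx)
    have h2 : HasDerivAt (fun y => 1 + u' y ^ 2)
        ((2 : ℕ) * u' x ^ (2 - 1) * (φ' (u x) * (1 + u' x ^ 2))) x :=
      ((hu' x hx).pow 2).const_add 1
    have h3 : HasDerivAt (fun y => Real.log (1 + u' y ^ 2))
        ((2 : ℕ) * u' x ^ (2 - 1) * (φ' (u x) * (1 + u' x ^ 2)) / (1 + u' x ^ 2)) x :=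
      h2.log (hpos x).ne'
    have h4 := h1.sub (h3.div_const 2)
    refine h4.congr_deriv ?_
    have h5 := (hpos x).ne'
    rw [mul_div_assoc, mul_div_cancel_right₀ _ h5]
    push_cast
    ring
  have hconst : ∀ x ∈ I, ∀ y ∈ I, f x = f y := by
    intro x hx y hy
    have := hIconv.norm_image_sub_le_of_norm_hasDerivWithin_le
      (f' := fun _ => (0 : ℝ)) (C := 0)
      (fun z hz => (hdf z hz).hasDerivWithinAt) (fun z _ => by simp) hy hx
    simpa [sub_eq_zero] using this
  have hsqrt : ∀ x : ℝ, Real.sqrt (1 + u' x ^ 2)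
      = Real.exp (Real.log (1 + u' x ^ 2) / 2) := by
    intro x
    rw [Real.sqrt_eq_rpow, Real.rpow_def_of_pos (hpos x)]
    ring_nf
  have hexp : ∀ x : ℝ, Real.exp (f x)
      = Real.exp (φ (u x)) / Real.sqrt (1 + u' x ^ 2) := by
    intro x
    rw [hsqrt, hf, Real.exp_sub]
  constructor
  · intro x hx y hy
    rw [← hexp, ← hexp, hconst x hx y hy]
  · intro u₀ h0 hu0 hu'0 x hx
    have h := hconst x hx 0 h0
    have hf0 : f 0 = φ u₀ := by simp [hf, hu'0, hu0]
    have : Real.log (1 + u' x ^ 2) = 2 * (φ (u x) - φ u₀) := by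
      rw [hf0] at h
      simp only [hf] at h
      linarith
    have := congrArg Real.exp this
    rw [Real.exp_log (hpos x)] at this
    linarith
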